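/- Let Σ be an n×n positive definite matrix and Σ̃ a symmetric matrix satisfying (1−ε)Σ ⪯ Σ̃ ⪯ (1+ε)Σ. Then for any v ∈ ℝⁿ and any subset A ⊆ [n], ‖Σ_{AA}^{−1/2}(Σ̃_A − Σ_A)v‖₂ ≤ ε·√(⟨v, Σ v⟩), where Σ_{AA} is the principal submatrix on rows and columns in A, and Σ_A (resp. Σ̃_A) is the |A|×n submatrix of rows in A. -/

import Mathlib

open Matrix

section

open scoped ComplexOrder

noncomputable def Matrix.PosSemidef.sqrt {n 𝕜 : Type*} [Fintype n] [DecidableEq n] [RCLike 𝕜]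
    {A : Matrix n n 𝕜} (hA : Matrix.PosSemidef A) : Matrix n n 𝕜 :=
  hA.1.eigenvectorUnitary.1 * diagonal ((↑) ∘ (√·) ∘ hA.1.eigenvalues) *
  (star hA.1.eigenvectorUnitary : Matrix n n 𝕜)

end

section
open scoped ComplexOrder
theorem Matrix.PosSemidef.sqrt_mul_self {n 𝕜 : Type*} [Fintype n] [DecidableEq n] [RCLike 𝕜]
    {A : Matrix n n 𝕜} (hA : Matrix.PosSemidef A) : hA.sqrt * hA.sqrt = A := by
  unfold Matrix.PosSemidef.sqrt
  have hU : (star hA.1.eigenvectorUnitary : Matrix n n 𝕜) * hA.1.eigenvectorUnitary = 1 :=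
    Unitary.coe_star_mul_self _
  have hD : diagonal (((↑) ∘ (√·) ∘ hA.1.eigenvalues) : n → 𝕜) *
      diagonal ((↑) ∘ (√·) ∘ hA.1.eigenvalues) = diagonal (RCLike.ofReal ∘ hA.1.eigenvalues) := by
    rw [diagonal_mul_diagonal]
    congr 1
    funext i
    simp only [Function.comp_apply]
    rw [← RCLike.ofReal_mul, Real.mul_self_sqrt (hA.eigenvalues_nonneg i)]
  calc _ = (hA.1.eigenvectorUnitary : Matrix n n 𝕜) * (diagonal ((↑) ∘ (√·) ∘ hA.1.eigenvalues) *
        ((star hA.1.eigenvectorUnitary : Matrix n n 𝕜) * (hA.1.eigenvectorUnitary : Matrix n n 𝕜)) *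
        diagonal ((↑) ∘ (√·) ∘ hA.1.eigenvalues)) * (star hA.1.eigenvectorUnitary : Matrix n n 𝕜) := by
          simp only [Matrix.mul_assoc]
    _ = A := by
      rw [hU, Matrix.mul_one, hD]
      conv_rhs => rw [hA.1.spectral_theorem, Unitary.conjStarAlgAut_apply]

theorem Matrix.PosSemidef.sqrt_isHermitian {n 𝕜 : Type*} [Fintype n] [DecidableEq n] [RCLike 𝕜]
    {A : Matrix n n 𝕜} (hA : Matrix.PosSemidef A) : hA.sqrt.IsHermitian := by
  unfold Matrix.PosSemidef.sqrt
  have hd : star (((↑) ∘ (√·) ∘ hA.1.eigenvalues) : n → 𝕜) = ((↑) ∘ (√·) ∘ hA.1.eigenvalues) := by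
    funext i; simp
  simp only [Matrix.IsHermitian, Matrix.conjTranspose_mul, Matrix.mul_assoc, Unitary.coe_star,
    Matrix.star_eq_conjTranspose, Matrix.conjTranspose_conjTranspose, Matrix.diagonal_conjTranspose, hd]

end

section Aux

variable {n : ℕ}

/-- Extension of a vector on a subset `A` by zeros. -/
def extv (A : Finset (Fin n)) (x : {i // i ∈ A} → ℝ) : Fin n → ℝ :=
  fun j => if h : j ∈ A then x ⟨j, h⟩ else 0

lemma extv_dot (A : Finset (Fin n)) (x : {i // i ∈ A} → ℝ) (y : Fin n → ℝ) :
    extv A x ⬝ᵥ y = ∑ i : {i // i ∈ A}, x i * y i.val := by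
  rw [Finset.univ_eq_attach]
  unfold dotProduct
  rw [← Finset.sum_subset (Finset.subset_univ A) (fun j _ hj => by simp [extv, hj]),
      ← Finset.sum_attach A (fun j => extv A x j * y j)]
  exact Finset.sum_congr rfl fun i _ => by simp [extv]

lemma dot_extv (A : Finset (Fin n)) (x : {i // i ∈ A} → ℝ) (y : Fin n → ℝ) :
    y ⬝ᵥ extv A x = ∑ i : {i // i ∈ A}, x i * y i.val := by
  rw [dotProduct_comm, extv_dot]

lemma extv_eq_zero (A : Finset (Fin n)) (x : {i // i ∈ A} → ℝ) (h : extv A x = 0) : x = 0 := by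
  funext i
  have := congrFun h i.val
  simpa [extv, i.2] using this

lemma extv_dot_mulVec (A : Finset (Fin n)) (x : {i // i ∈ A} → ℝ)
    (M : Matrix (Fin n) (Fin n) ℝ) (v : Fin n → ℝ) :
    extv A x ⬝ᵥ M.mulVec v
      = x ⬝ᵥ (M.submatrix (Subtype.val : {i // i ∈ A} → Fin n) id).mulVec v := by
  rw [extv_dot]
  rfl

lemma extv_quad (A : Finset (Fin n)) (x : {i // i ∈ A} → ℝ) (M : Matrix (Fin n) (Fin n) ℝ) :
    extv A x ⬝ᵥ M.mulVec (extv A x)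
      = x ⬝ᵥ (M.submatrix (Subtype.val : {i // i ∈ A} → Fin n)
          (Subtype.val : {i // i ∈ A} → Fin n)).mulVec x := by
  rw [extv_dot]
  apply Finset.sum_congr rfl
  intro i _
  congr 1
  show (M.mulVec (extv A x)) i.val = _
  unfold mulVec
  show (fun k => M i.val k) ⬝ᵥ extv A x = _
  rw [dot_extv]
  simp [Matrix.mulVec, dotProduct, Matrix.submatrix, mul_comm]

lemma cs_aux (Sig E : Matrix (Fin n) (Fin n) ℝ) (hSig : Sig.PosDef) (hE : E.IsSymm)
    (ε : ℝ) (h1 : (ε • Sig - E).PosSemidef) (h2 : (ε • Sig + E).PosSemidef)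
    (x y : Fin n → ℝ) :
    x ⬝ᵥ E.mulVec y ≤ ε * Real.sqrt (x ⬝ᵥ Sig.mulVec x) * Real.sqrt (y ⬝ᵥ Sig.mulVec y) := by
  have hup : ∀ z : Fin n → ℝ, z ⬝ᵥ E.mulVec z ≤ ε * (z ⬝ᵥ Sig.mulVec z) := by
    intro z
    have := h1.dotProduct_mulVec_nonneg z
    simp only [sub_mulVec, dotProduct_sub, smul_mulVec, dotProduct_smul,
      smul_eq_mul, star_trivial] at this
    linarith
  have hlo : ∀ z : Fin n → ℝ, -(ε * (z ⬝ᵥ Sig.mulVec z)) ≤ z ⬝ᵥ E.mulVec z := by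
    intro z
    have := h2.dotProduct_mulVec_nonneg z
    simp only [add_mulVec, dotProduct_add, smul_mulVec, dotProduct_smul,
      smul_eq_mul, star_trivial] at this
    linarith
  have hsymm : ∀ p q : Fin n → ℝ, p ⬝ᵥ E.mulVec q = q ⬝ᵥ E.mulVec p := by
    intro p q
    rw [dotProduct_mulVec, ← mulVec_transpose, hE.eq, dotProduct_comm]
  by_cases hx : x = 0
  · simp [hx]
  by_cases hy : y = 0
  · simp [hy]
  · have ha : 0 < x ⬝ᵥ Sig.mulVec x := by simpa using hSig.dotProduct_mulVec_pos hx
    have hb : 0 < y ⬝ᵥ Sig.mulVec y := by simpa using hSig.dotProduct_mulVec_pos hy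
    set a := x ⬝ᵥ Sig.mulVec x with ha'
    set b := y ⬝ᵥ Sig.mulVec y with hb'
    have hsa : 0 < Real.sqrt a := Real.sqrt_pos.mpr ha
    have hsb : 0 < Real.sqrt b := Real.sqrt_pos.mpr hb
    set x1 : Fin n → ℝ := (Real.sqrt a)⁻¹ • x with hx1
    set y1 : Fin n → ℝ := (Real.sqrt b)⁻¹ • y with hy1
    have hqx1 : x1 ⬝ᵥ Sig.mulVec x1 = 1 := by
      simp only [hx1, smul_dotProduct, mulVec_smul, dotProduct_smul, smul_eq_mul]
      rw [← ha']
      field_simp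
      rw [Real.sq_sqrt ha.le]
    have hqy1 : y1 ⬝ᵥ Sig.mulVec y1 = 1 := by
      simp only [hy1, smul_dotProduct, mulVec_smul, dotProduct_smul, smul_eq_mul]
      rw [← hb']
      field_simp
      rw [Real.sq_sqrt hb.le]
    have key : x1 ⬝ᵥ E.mulVec y1 ≤ ε := by
      have e1 := hup (x1 + y1)
      have e2 := hlo (x1 - y1)
      have hs := hsymm x1 y1
      simp only [mulVec_add, mulVec_sub, dotProduct_add, dotProduct_sub,
        add_dotProduct, sub_dotProduct] at e1 e2
      rw [hqx1, hqy1] at e1 e2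
      linarith
    have hrw : x ⬝ᵥ E.mulVec y = Real.sqrt a * Real.sqrt b * (x1 ⬝ᵥ E.mulVec y1) := by
      simp only [hx1, hy1, smul_dotProduct, mulVec_smul, dotProduct_smul, smul_eq_mul]
      field_simp
    rw [hrw]
    calc Real.sqrt a * Real.sqrt b * (x1 ⬝ᵥ E.mulVec y1)
        ≤ Real.sqrt a * Real.sqrt b * ε :=
          mul_le_mul_of_nonneg_left key (by positivity)
      _ = ε * Real.sqrt a * Real.sqrt b := by ring

end Aux

/-- If (1-ε)Σ ⪯ Σ̃ ⪯ (1+ε)Σ with Σ positive definite, then for any v and A ⊆ [n],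
‖Σ_{AA}^{-1/2}(Σ̃_A - Σ_A)v‖₂ ≤ ε √(⟨v,Σv⟩). -/
theorem stmt_1 {n : ℕ} (Sig SigT : Matrix (Fin n) (Fin n) ℝ)
    (hSig : Sig.PosDef) (hSigT : SigT.IsSymm) (ε : ℝ)
    (hlow : (SigT - (1 - ε) • Sig).PosSemidef)
    (hhigh : ((1 + ε) • Sig - SigT).PosSemidef)
    (v : Fin n → ℝ) (A : Finset (Fin n)) :
    (fun d => Real.sqrt (d ⬝ᵥ d))
      ((((hSig.posSemidef.submatrix (Subtype.val : {i // i ∈ A} → Fin n)).sqrt)⁻¹).mulVec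
        (((SigT.submatrix (Subtype.val : {i // i ∈ A} → Fin n) id)
          - (Sig.submatrix (Subtype.val : {i // i ∈ A} → Fin n) id)).mulVec v))
      ≤ ε * Real.sqrt (v ⬝ᵥ Sig.mulVec v) := by
  classical
  set e : {i // i ∈ A} → Fin n := Subtype.val with he
  set SAA := Sig.submatrix e e with hSAA
  have hSAA_psd : SAA.PosSemidef := hSig.posSemidef.submatrix e
  set S := hSAA_psd.sqrt with hS
  set R := S⁻¹ with hR
  set E := SigT - Sig with hEdef
  -- Positive definiteness of SAA
  have hSAA_pd : SAA.PosDef := by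
    refine Matrix.PosDef.of_dotProduct_mulVec_pos hSAA_psd.1 fun z hz => ?_
    have hez : extv A z ≠ 0 := fun h => hz (extv_eq_zero A z h)
    have := hSig.dotProduct_mulVec_pos hez
    simpa [extv_quad A z Sig] using this
  have hdetS : IsUnit S.det := by
    have hmul : S * S = SAA := hSAA_psd.sqrt_mul_self
    have : S.det * S.det = SAA.det := by rw [← det_mul, hmul]
    have hd : SAA.det ≠ 0 := ne_of_gt hSAA_pd.det_pos
    refine isUnit_iff_ne_zero.mpr fun h0 => hd ?_
    rw [← this, h0, mul_zero]
  have hS_symm : Sᵀ = S := by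
    have := hSAA_psd.sqrt_isHermitian
    exact (Matrix.conjTranspose_eq_transpose_of_trivial S).symm.trans this
  have hR_symm : Rᵀ = R := by
    rw [hR, transpose_nonsing_inv, hS_symm]
  have hRS : R * S = 1 := nonsing_inv_mul S hdetS
  have hSR : S * R = 1 := mul_nonsing_inv S hdetS
  -- symmetry of E
  have hE : E.IsSymm := by
    have hSs : Sigᵀ = Sig := by
      rw [← Sig.conjTranspose_eq_transpose_of_trivial]; exact hSig.1
    rw [hEdef, Matrix.IsSymm, transpose_sub, hSigT.eq, hSs]
  -- PSD hypotheses in the form needed by cs_aux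
  have h1 : (ε • Sig - E).PosSemidef := by
    have : ε • Sig - E = (1 + ε) • Sig - SigT := by
      rw [hEdef, add_smul, one_smul]; abel
    rw [this]; exact hhigh
  have h2 : (ε • Sig + E).PosSemidef := by
    have : ε • Sig + E = SigT - (1 - ε) • Sig := by
      rw [hEdef, sub_smul, one_smul]; abel
    rw [this]; exact hlow
  -- main objects
  set B := E.submatrix e id with hB
  set w := R.mulVec (B.mulVec v) with hw
  set x := R.mulVec w with hx
  set u := extv A x with hu
  have hBgoal : (SigT.submatrix e id - Sig.submatrix e id) = B := by
    rw [hB, hEdef]; ext i j; simp [Matrix.submatrix]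
  have hRdot : ∀ (p : {i // i ∈ A} → ℝ) (q : {i // i ∈ A} → ℝ),
      p ⬝ᵥ R.mulVec q = (R.mulVec p) ⬝ᵥ q := by
    intro p q
    rw [dotProduct_mulVec, ← mulVec_transpose, hR_symm, dotProduct_comm]
  -- Claim 1 : w ⬝ᵥ w = u ⬝ᵥ E.mulVec v
  have claim1 : w ⬝ᵥ w = u ⬝ᵥ E.mulVec v := by
    calc w ⬝ᵥ w = w ⬝ᵥ R.mulVec (B.mulVec v) := by rw [← hw]
      _ = (R.mulVec w) ⬝ᵥ (B.mulVec v) := hRdot w (B.mulVec v)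
      _ = x ⬝ᵥ (B.mulVec v) := by rw [← hx]
      _ = u ⬝ᵥ E.mulVec v := (extv_dot_mulVec A x E v).symm
  -- Claim 2 : u ⬝ᵥ Sig.mulVec u = w ⬝ᵥ w
  have claim2 : u ⬝ᵥ Sig.mulVec u = w ⬝ᵥ w := by
    have hsand : R * SAA * R = 1 := by
      rw [← hSAA_psd.sqrt_mul_self, ← hS]
      calc R * (S * S) * R = (R * S) * (S * R) := by
            simp only [Matrix.mul_assoc]
        _ = 1 := by rw [hRS, hSR, one_mul]
    calc u ⬝ᵥ Sig.mulVec u = x ⬝ᵥ SAA.mulVec x := extv_quad A x Sig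
      _ = (R.mulVec w) ⬝ᵥ SAA.mulVec (R.mulVec w) := by rw [← hx]
      _ = w ⬝ᵥ R.mulVec (SAA.mulVec (R.mulVec w)) := (hRdot w _).symm
      _ = w ⬝ᵥ (R * SAA * R).mulVec w := by rw [mulVec_mulVec, mulVec_mulVec]
      _ = w ⬝ᵥ w := by rw [hsand, one_mulVec]
  -- conclude
  show Real.sqrt (w ⬝ᵥ w) ≤ ε * Real.sqrt (v ⬝ᵥ Sig.mulVec v)
  by_cases hv : v = 0
  · simp [hv, hw, hx, mulVec_zero]
  · have hvq : 0 < v ⬝ᵥ Sig.mulVec v := by simpa using hSig.dotProduct_mulVec_pos hv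
    have hεnn : 0 ≤ ε := by
      have e1 := h1.dotProduct_mulVec_nonneg v
      have e2 := h2.dotProduct_mulVec_nonneg v
      simp only [sub_mulVec, add_mulVec, dotProduct_sub, dotProduct_add,
        smul_mulVec, dotProduct_smul, smul_eq_mul, star_trivial] at e1 e2
      nlinarith
    have hWnn : 0 ≤ w ⬝ᵥ w := Finset.sum_nonneg fun i _ => mul_self_nonneg _
    have hcs := cs_aux Sig E hSig hE ε h1 h2 u v
    rw [← claim1, claim2] at hcs
    -- hcs : w ⬝ᵥ w ≤ ε * √(w⬝w) * √(vΣv)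
    by_cases hW0 : Real.sqrt (w ⬝ᵥ w) = 0
    · rw [hW0]
      positivity
    · have hWpos : 0 < Real.sqrt (w ⬝ᵥ w) :=
        lt_of_le_of_ne (Real.sqrt_nonneg _) (Ne.symm hW0)
      have hself : Real.sqrt (w ⬝ᵥ w) * Real.sqrt (w ⬝ᵥ w) = w ⬝ᵥ w :=
        Real.mul_self_sqrt hWnn
      have : Real.sqrt (w ⬝ᵥ w) * Real.sqrt (w ⬝ᵥ w)
          ≤ (ε * Real.sqrt (v ⬝ᵥ Sig.mulVec v)) * Real.sqrt (w ⬝ᵥ w) := by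
        rw [hself]; linarith [hcs]
      exact le_of_mul_le_mul_right this hWpos
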